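/- Let f be a non-negative submodular function on a finite set V with partition matroid constraints given by a partition B_1,…,B_k of V and integer thresholds d_1,…,d_k (1 ≤ d_i ≤ |B_i|), let d = Σ_i d_i, d̄ = min_i d_i, and let OPT be a feasible set maximizing f. Let X ⊆ V be feasible with |X| = j < d̄, and suppose there exists w ∈ V∖X with f(X ∪ {w}) ≥ f(X). Then there exists v ∈ V∖X such that X ∪ {v} is feasible and f(X ∪ {v}) − f(X) ≥ (1/d)·( f(OPT) − f(X) − j · ε_{d+j+1} ), where ε is the monotonicity approximation term of f. -/

import Mathlib

/-- Greedy improvement lemma for a non-negative submodular function under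
partition matroid constraints. If `X` is feasible with `|X| = j < d̄` and some element of
`V ∖ X` has non-negative marginal gain, then some feasible addition `v` satisfies
`f(X ∪ {v}) − f(X) ≥ (1/d)·(f(OPT) − f(X) − j·ε_{d+j+1})`. -/
theorem stmt_1 {α : Type*} [DecidableEq α] (V : Finset α) (f : Finset α → ℝ)
    (hf0 : ∀ X ⊆ V, 0 ≤ f X)
    (hsub : ∀ X Y : Finset α, X ⊆ Y → Y ⊆ V → ∀ v ∈ V, v ∉ Y →
      f (insert v X) - f X ≥ f (insert v Y) - f Y)
    (k : ℕ) (hk : 0 < k) (B : Fin k → Finset α)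
    (hdisj : ∀ i j : Fin k, i ≠ j → Disjoint (B i) (B j))
    (hcover : Finset.univ.biUnion B = V)
    (dPart : Fin k → ℕ) (hdPart : ∀ i, 1 ≤ dPart i ∧ dPart i ≤ (B i).card)
    (d : ℕ) (hd : d = ∑ i, dPart i)
    (dbar : ℕ) (hdbar : IsLeast (Set.range dPart) dbar)
    (ε : ℕ → ℝ) (hε0 : ε 0 = 0)
    (hε : ∀ j : ℕ, 0 < j →
      IsGreatest {r : ℝ | ∃ X ⊆ V, ∃ v ∈ V, X.card < j ∧ r = f (X.erase v) - f X} (ε j))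
    (OPT : Finset α) (hOPTsub : OPT ⊆ V) (hOPTfeas : ∀ i, (OPT ∩ B i).card ≤ dPart i)
    (hOPTmax : ∀ Y ⊆ V, (∀ i, (Y ∩ B i).card ≤ dPart i) → f Y ≤ f OPT)
    (X : Finset α) (hX : X ⊆ V) (hXfeas : ∀ i, (X ∩ B i).card ≤ dPart i)
    (j : ℕ) (hj : X.card = j) (hjlt : j < dbar)
    (hw : ∃ w ∈ V \ X, f (insert w X) ≥ f X) :
    ∃ v ∈ V \ X, (∀ i, ((insert v X) ∩ B i).card ≤ dPart i) ∧
      f (insert v X) - f X ≥ (1 / (d : ℝ)) * (f OPT - f X - (j : ℝ) * ε (d + j + 1)) := by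
  classical
  obtain ⟨w, hwVX, hwgain⟩ := hw
  -- d is positive
  have hdpos : 0 < d := by
    rw [hd]
    have : (0:ℕ) < dPart ⟨0, hk⟩ := (hdPart ⟨0, hk⟩).1
    exact Finset.sum_pos' (fun i _ => Nat.zero_le _) ⟨⟨0, hk⟩, Finset.mem_univ _, this⟩
  have hdR : (0:ℝ) < (d:ℝ) := by exact_mod_cast hdpos
  -- OPT has cardinality at most d
  have hOPTcard : OPT.card ≤ d := by
    have hrepr : OPT = Finset.univ.biUnion (fun i => OPT ∩ B i) := by
      ext x
      simp only [Finset.mem_biUnion, Finset.mem_inter, Finset.mem_univ, true_and]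
      constructor
      · intro hx
        have hxV : x ∈ V := hOPTsub hx
        rw [← hcover] at hxV
        obtain ⟨i, _, hi⟩ := Finset.mem_biUnion.mp hxV
        exact ⟨i, hx, hi⟩
      · rintro ⟨i, hx, _⟩; exact hx
    calc OPT.card = (Finset.univ.biUnion (fun i => OPT ∩ B i)).card := by rw [← hrepr]
      _ ≤ ∑ i, (OPT ∩ B i).card := Finset.card_biUnion_le
      _ ≤ ∑ i, dPart i := Finset.sum_le_sum (fun i _ => hOPTfeas i)
      _ = d := hd.symm
  -- the epsilon term
  set E : ℝ := ε (d + j + 1) with hE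
  have hεg := hε (d + j + 1) (by omega)
  -- E ≥ 0
  have hV0 : ∃ v0, v0 ∈ V := by
    have h1 : 1 ≤ (B ⟨0, hk⟩).card := le_trans (hdPart ⟨0, hk⟩).1 (hdPart ⟨0, hk⟩).2
    obtain ⟨v0, hv0⟩ := Finset.card_pos.mp (show 0 < (B ⟨0, hk⟩).card by omega)
    exact ⟨v0, by rw [← hcover]; exact Finset.mem_biUnion.mpr ⟨⟨0, hk⟩, Finset.mem_univ _, hv0⟩⟩
  obtain ⟨v0, hv0⟩ := hV0
  have hEnn : 0 ≤ E := by
    have : (0:ℝ) ∈ {r : ℝ | ∃ X ⊆ V, ∃ v ∈ V, X.card < d + j + 1 ∧ r = f (X.erase v) - f X} := by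
      refine ⟨∅, Finset.empty_subset V, v0, hv0, by simp, by simp⟩
    exact hεg.2 this
  -- choose v maximizing the gain
  obtain ⟨v, hvVX, hvmax⟩ := Finset.exists_max_image (V \ X) (fun u => f (insert u X)) ⟨w, hwVX⟩
  have hvgain0 : f X ≤ f (insert v X) := le_trans hwgain (hvmax w hwVX)
  refine ⟨v, hvVX, ?_, ?_⟩
  · -- feasibility of insert v X
    intro i
    have h1 : ((insert v X) ∩ B i).card ≤ (insert v X).card := Finset.card_le_card Finset.inter_subset_left
    have h2 : (insert v X).card ≤ X.card + 1 := Finset.card_insert_le _ _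
    have h3 : dbar ≤ dPart i := hdbar.2 ⟨i, rfl⟩
    have h4 : X.card + 1 ≤ dbar := by omega
    exact le_trans (le_trans h1 (le_trans h2 h4)) h3
  · -- main inequality
    -- removal chain: f OPT - |T| * E ≤ f (OPT ∪ T) for T ⊆ X \ OPT
    have key : ∀ T : Finset α, T ⊆ X \ OPT → f OPT - T.card * E ≤ f (OPT ∪ T) := by
      intro T
      induction T using Finset.induction_on with
      | empty => intro _; simp
      | @insert a T ha ih =>
        intro hsubT
        have haXO : a ∈ X \ OPT := hsubT (Finset.mem_insert_self a T)
        have hT : T ⊆ X \ OPT := fun x hx => hsubT (Finset.mem_insert_of_mem hx)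
        have haO : a ∉ OPT := (Finset.mem_sdiff.mp haXO).2
        have haV : a ∈ V := hX (Finset.mem_sdiff.mp haXO).1
        have hSV : OPT ∪ insert a T ⊆ V := by
          apply Finset.union_subset hOPTsub
          intro x hx
          rcases Finset.mem_insert.mp hx with h | h
          · subst h; exact haV
          · exact hX (Finset.mem_sdiff.mp (hT h)).1
        have hScard : (OPT ∪ insert a T).card < d + j + 1 := by
          have h1 : (OPT ∪ insert a T).card ≤ OPT.card + (insert a T).card := Finset.card_union_le _ _
          have h2 : (insert a T).card ≤ X.card := Finset.card_le_card
            (le_trans hsubT (Finset.sdiff_subset))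
          omega
        have hSer : (OPT ∪ insert a T).erase a = OPT ∪ T := by
          have heq : OPT ∪ insert a T = insert a (OPT ∪ T) := by
            ext x; simp only [Finset.mem_insert, Finset.mem_union]; tauto
          rw [heq, Finset.erase_insert (by simp [haO, ha])]
        have hstep : f ((OPT ∪ insert a T).erase a) - f (OPT ∪ insert a T) ≤ E := by
          apply hεg.2
          exact ⟨OPT ∪ insert a T, hSV, a, haV, hScard, rfl⟩
        rw [hSer] at hstep
        have hcard : ((insert a T).card : ℝ) = (T.card : ℝ) + 1 := by
          rw [Finset.card_insert_of_notMem ha]; push_cast; ring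
        have := ih hT
        rw [hcard]
        linarith
    have hkey := key (X \ OPT) (Finset.Subset.refl _)
    have hXO : OPT ∪ (X \ OPT) = X ∪ OPT := by
      ext x; simp only [Finset.mem_union, Finset.mem_sdiff]; tauto
    rw [hXO] at hkey
    have hcardXO : ((X \ OPT).card : ℝ) ≤ (j : ℝ) := by
      have : (X \ OPT).card ≤ X.card := Finset.card_le_card Finset.sdiff_subset
      exact_mod_cast hj ▸ this
    have hlow : f OPT - (j : ℝ) * E ≤ f (X ∪ OPT) := by
      have : ((X \ OPT).card : ℝ) * E ≤ (j : ℝ) * E := mul_le_mul_of_nonneg_right hcardXO hEnn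
      linarith
    -- telescoping bound
    have tele : ∀ O : Finset α, O ⊆ V \ X →
        f (X ∪ O) - f X ≤ ∑ o ∈ O, (f (insert o X) - f X) := by
      intro O
      induction O using Finset.induction_on with
      | empty => intro _; simp
      | @insert a O ha ih =>
        intro hsubO
        have haVX : a ∈ V \ X := hsubO (Finset.mem_insert_self a O)
        have hO : O ⊆ V \ X := fun x hx => hsubO (Finset.mem_insert_of_mem hx)
        have haV : a ∈ V := (Finset.mem_sdiff.mp haVX).1
        have haX : a ∉ X := (Finset.mem_sdiff.mp haVX).2
        have haXO : a ∉ X ∪ O := by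
          simp only [Finset.mem_union, not_or]; exact ⟨haX, ha⟩
        have hXOV : X ∪ O ⊆ V := Finset.union_subset hX (le_trans hO Finset.sdiff_subset)
        have hmono := hsub X (X ∪ O) Finset.subset_union_left hXOV a haV haXO
        have heq : X ∪ insert a O = insert a (X ∪ O) := by
          ext x; simp only [Finset.mem_insert, Finset.mem_union]; tauto
        rw [heq, Finset.sum_insert ha]
        have := ih hO
        linarith
    have htele := tele (OPT \ X) (by
      intro x hx
      simp only [Finset.mem_sdiff] at hx ⊢
      exact ⟨hOPTsub hx.1, hx.2⟩)
    have hXO2 : X ∪ (OPT \ X) = X ∪ OPT := by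
      ext x; simp only [Finset.mem_union, Finset.mem_sdiff]; tauto
    rw [hXO2] at htele
    -- bound the sum by d times the max gain
    have hsum : ∑ o ∈ (OPT \ X), (f (insert o X) - f X) ≤ (d : ℝ) * (f (insert v X) - f X) := by
      have h1 : ∑ o ∈ (OPT \ X), (f (insert o X) - f X)
          ≤ ∑ _o ∈ (OPT \ X), (f (insert v X) - f X) := by
        apply Finset.sum_le_sum
        intro o ho
        have hoVX : o ∈ V \ X := by
          simp only [Finset.mem_sdiff] at ho ⊢
          exact ⟨hOPTsub ho.1, ho.2⟩
        have := hvmax o hoVX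
        linarith
      have h2 : ∑ _o ∈ (OPT \ X), (f (insert v X) - f X)
          = ((OPT \ X).card : ℝ) * (f (insert v X) - f X) := by
        rw [Finset.sum_const, nsmul_eq_mul]
      have h3 : ((OPT \ X).card : ℝ) ≤ (d : ℝ) := by
        have : (OPT \ X).card ≤ OPT.card := Finset.card_le_card Finset.sdiff_subset
        exact_mod_cast le_trans this hOPTcard
      have h4 : ((OPT \ X).card : ℝ) * (f (insert v X) - f X) ≤ (d : ℝ) * (f (insert v X) - f X) :=
        mul_le_mul_of_nonneg_right h3 (by linarith)
      linarith
    have hfinal : f OPT - f X - (j : ℝ) * E ≤ (d : ℝ) * (f (insert v X) - f X) := by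
      linarith
    rw [ge_iff_le, one_div, inv_mul_le_iff₀ hdR]
    linarith
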